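/- arXiv:1404.3816 — 2 statements merged into one kernel-verified Lean document; each statement's English description precedes it below -/
import Mathlib

section
/- Equivalence of covariance and cross-covariance recursions in the Kalman filter with a random-walk forecast model: Let H be an n×m real matrix, R an n×n real matrix, Q and P₀ m×m real matrices. Define the Kalman-filter covariance sequences by Pᵃ(0) = P₀ and, for each t ≥ 0, Pᶠ(t+1) = Pᵃ(t) + Q, K(t+1) = Pᶠ(t+1) Hᵀ (H Pᶠ(t+1) Hᵀ + R)⁻¹, Pᵃ(t+1) = Pᶠ(t+1) − K(t+1) H Pᶠ(t+1), assuming H Pᶠ(t+1) Hᵀ + R is invertible for every t. Define the HiKF cross-covariance sequences by Cᵃ(0) = P₀ Hᵀ and, for each t ≥ 0, Cᶠ(t+1) = Cᵃ(t) + Q Hᵀ, K'(t+1) = Cᶠ(t+1) (H Cᶠ(t+1) + R)⁻¹, Cᵃ(t+1) = Cᶠ(t+1) − K'(t+1) H Cᶠ(t+1). Then for every t ≥ 0 one has Cᵃ(t) = Pᵃ(t) Hᵀ, and for every t ≥ 1 one has Cᶠ(t) = Pᶠ(t) Hᵀ, H Cᶠ(t) + R = H Pᶠ(t) Hᵀ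 + R, and K'(t) = K(t). -/
open Matrix

/-- Equivalence of the Kalman-filter covariance recursion and the HiKF
cross-covariance recursion under the random-walk forecast model. -/
theorem hikf_cross_covariance_equivalence {m n : ℕ}
    (H : Matrix (Fin n) (Fin m) ℝ) (R : Matrix (Fin n) (Fin n) ℝ)
    (Q P₀ : Matrix (Fin m) (Fin m) ℝ)
    (Pa Pf : ℕ → Matrix (Fin m) (Fin m) ℝ)
    (K : ℕ → Matrix (Fin m) (Fin n) ℝ)
    (Ca Cf K' : ℕ → Matrix (Fin m) (Fin n) ℝ)
    (hPa0 : Pa 0 = P₀)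
    (hPf : ∀ t, Pf (t + 1) = Pa t + Q)
    (hK : ∀ t, K (t + 1) = Pf (t + 1) * Hᵀ * (H * Pf (t + 1) * Hᵀ + R)⁻¹)
    (hPa : ∀ t, Pa (t + 1) = Pf (t + 1) - K (t + 1) * (H * Pf (t + 1)))
    (hinv : ∀ t, IsUnit (H * Pf (t + 1) * Hᵀ + R))
    (hCa0 : Ca 0 = P₀ * Hᵀ)
    (hCf : ∀ t, Cf (t + 1) = Ca t + Q * Hᵀ)
    (hK' : ∀ t, K' (t + 1) = Cf (t + 1) * (H * Cf (t + 1) + R)⁻¹)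
    (hCa : ∀ t, Ca (t + 1) = Cf (t + 1) - K' (t + 1) * (H * Cf (t + 1))) :
    (∀ t, Ca t = Pa t * Hᵀ) ∧
    (∀ t, 1 ≤ t →
      Cf t = Pf t * Hᵀ ∧
      H * Cf t + R = H * Pf t * Hᵀ + R ∧
      K' t = K t) := by
  have main : ∀ t, Ca t = Pa t * Hᵀ ∧
      (1 ≤ t → Cf t = Pf t * Hᵀ ∧
        H * Cf t + R = H * Pf t * Hᵀ + R ∧ K' t = K t) := by
    intro t
    induction t with
    | zero =>
      refine ⟨by rw [hCa0, hPa0], ?_⟩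
      intro h; omega
    | succ t ih =>
      have hCfE : Cf (t + 1) = Pf (t + 1) * Hᵀ := by
        rw [hCf, ih.1, hPf, Matrix.add_mul]
      have hHC : H * Cf (t + 1) + R = H * Pf (t + 1) * Hᵀ + R := by
        rw [hCfE, ← Matrix.mul_assoc]
      have hKE : K' (t + 1) = K (t + 1) := by
        rw [hK', hK, hCfE, ← Matrix.mul_assoc H]
      refine ⟨?_, fun _ => ⟨hCfE, hHC, hKE⟩⟩
      rw [hCa, hPa, hCfE, hKE, Matrix.sub_mul, Matrix.mul_assoc (K (t+1)), Matrix.mul_assoc H]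
  exact ⟨fun t => (main t).1, fun t h => (main t).2 h⟩
end

section
/- Equality of state estimates for the Kalman filter and the HiKF: Under the hypotheses of the covariance–cross-covariance equivalence (Pᵃ, Pᶠ, K defined by the Kalman recursion with Pᵃ(0) = P₀; Cᵃ, Cᶠ, K' defined by the HiKF recursion with Cᵃ(0) = P₀ Hᵀ; and H Pᶠ(t) Hᵀ + R invertible for all t ≥ 1), let y : ℕ → ℝⁿ be any sequence of measurement vectors and fix an initial estimate x̂₀ ∈ ℝᵐ. Define the Kalman-filter state sequence by x̂(0) = x̂₀ and x̂(t+1) = x̂(t) + K(t+1) (y(t+1) − H x̂(t)), and the HiKF state sequence by x̂'(0) = x̂₀ and x̂'(t+1) = x̂'(t) + K'(t+1) (y(t+1) − H x̂'(t)). Then x̂'(t) = x̂(t) for every t ≥ 0. -/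
open Matrix

/-- The HiKF state estimates coincide with the Kalman-filter state estimates. -/
theorem hikf_state_estimate_equivalence {m n : ℕ}
    (H : Matrix (Fin n) (Fin m) ℝ) (R : Matrix (Fin n) (Fin n) ℝ)
    (Q P₀ : Matrix (Fin m) (Fin m) ℝ)
    (Pa Pf : ℕ → Matrix (Fin m) (Fin m) ℝ)
    (K : ℕ → Matrix (Fin m) (Fin n) ℝ)
    (Ca Cf K' : ℕ → Matrix (Fin m) (Fin n) ℝ)
    (hPa0 : Pa 0 = P₀)
    (hPf : ∀ t, Pf (t + 1) = Pa t + Q)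
    (hK : ∀ t, K (t + 1) = Pf (t + 1) * Hᵀ * (H * Pf (t + 1) * Hᵀ + R)⁻¹)
    (hPa : ∀ t, Pa (t + 1) = Pf (t + 1) - K (t + 1) * (H * Pf (t + 1)))
    (hinv : ∀ t, IsUnit (H * Pf (t + 1) * Hᵀ + R))
    (hCa0 : Ca 0 = P₀ * Hᵀ)
    (hCf : ∀ t, Cf (t + 1) = Ca t + Q * Hᵀ)
    (hK' : ∀ t, K' (t + 1) = Cf (t + 1) * (H * Cf (t + 1) + R)⁻¹)
    (hCa : ∀ t, Ca (t + 1) = Cf (t + 1) - K' (t + 1) * (H * Cf (t + 1)))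
    (y : ℕ → Fin n → ℝ) (x₀ : Fin m → ℝ)
    (x x' : ℕ → Fin m → ℝ)
    (hx0 : x 0 = x₀)
    (hx : ∀ t, x (t + 1) = x t + (K (t + 1)).mulVec (y (t + 1) - H.mulVec (x t)))
    (hx'0 : x' 0 = x₀)
    (hx' : ∀ t, x' (t + 1) = x' t + (K' (t + 1)).mulVec (y (t + 1) - H.mulVec (x' t))) :
    ∀ t, x' t = x t := by
  have hC : ∀ t, Ca t = Pa t * Hᵀ := by
    intro t
    induction t with
    | zero => rw [hCa0, hPa0]
    | succ t ih =>
      have hcf : Cf (t + 1) = Pf (t + 1) * Hᵀ := by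
        rw [hCf, hPf, ih, Matrix.add_mul]
      have hk : K' (t + 1) = K (t + 1) := by
        rw [hK', hK, hcf, ← Matrix.mul_assoc H, Matrix.mul_assoc]
      rw [hCa, hPa, hcf, hk, Matrix.sub_mul, Matrix.mul_assoc, Matrix.mul_assoc]
  have hKeq : ∀ t, K' (t + 1) = K (t + 1) := by
    intro t
    have hcf : Cf (t + 1) = Pf (t + 1) * Hᵀ := by
      rw [hCf, hPf, hC, Matrix.add_mul]
    rw [hK', hK, hcf, ← Matrix.mul_assoc H, Matrix.mul_assoc]
  intro t
  induction t with
  | zero => rw [hx0, hx'0]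
  | succ t ih => rw [hx, hx', ih, hKeq]
end
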